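/- Let p, q, a, b be complex numbers with |p| < 1, |q| < 1, |b| < 1, b ≠ 0, a ≠ 1, and suppose a b p^{j+1} ≠ 1 for all integers j ≥ 0 (so all denominators are nonzero; note (q;q)_k ≠ 0 automatically since |q| < 1). Then Gasper's bibasic identity holds: Σ_{k=0}^{∞} [ (1 − a p^k q^k)/(1 − a) ] · (a; p)_k (b^{−1}; q)_k b^k / ( (q; q)_k (a b p; p)_k ) = 0, where the series converges. -/

import Mathlib

open Finset Filter Topology

set_option maxHeartbeats 2000000 in
/-- **Gasper's bibasic identity.**
Let `p, q, a, b` be complex numbers with `|p| < 1`, `|q| < 1`, `|b| < 1`, `b ≠ 0`,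
`a ≠ 1`, and `a b p^(j+1) ≠ 1` for all `j ≥ 0`.  Then
`∑_{k=0}^{∞} ((1 - a p^k q^k)/(1 - a)) (a;p)_k (b⁻¹;q)_k b^k / ((q;q)_k (a b p;p)_k) = 0`,
the series being convergent with sum `0`. -/
theorem gasper_bibasic (p q a b : ℂ) (hp : ‖p‖ < 1) (hq : ‖q‖ < 1)
    (hb : ‖b‖ < 1) (hb0 : b ≠ 0) (ha : a ≠ 1)
    (habp : ∀ j : ℕ, a * b * p ^ (j + 1) ≠ 1) :
    HasSum
      (fun k : ℕ =>
        (1 - a * p ^ k * q ^ k) / (1 - a) *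
          ((∏ j ∈ range k, (1 - a * p ^ j)) * (∏ j ∈ range k, (1 - b⁻¹ * q ^ j)) * b ^ k) /
          ((∏ j ∈ range k, (1 - q * q ^ j)) * ∏ j ∈ range k, (1 - a * b * p * p ^ j)))
      0 := by
  set f : ℕ → ℂ := fun k : ℕ =>
        (1 - a * p ^ k * q ^ k) / (1 - a) *
          ((∏ j ∈ range k, (1 - a * p ^ j)) * (∏ j ∈ range k, (1 - b⁻¹ * q ^ j)) * b ^ k) /
          ((∏ j ∈ range k, (1 - q * q ^ j)) * ∏ j ∈ range k, (1 - a * b * p * p ^ j)) with hfdef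
  have h1a : (1:ℂ) - a ≠ 0 := sub_ne_zero.mpr fun h => ha h.symm
  have h1b : (1:ℂ) - b ≠ 0 := by
    intro h
    rw [sub_eq_zero] at h
    rw [← h] at hb
    simp at hb
  have hqfac : ∀ j : ℕ, (1:ℂ) - q * q ^ j ≠ 0 := by
    intro j h
    rw [sub_eq_zero] at h
    have h2 : ‖q * q ^ j‖ < 1 := by
      rw [norm_mul, norm_pow]
      calc ‖q‖ * ‖q‖ ^ j ≤ ‖q‖ * 1 := by
            gcongr
            exact pow_le_one₀ (norm_nonneg q) hq.le
        _ = ‖q‖ := mul_one _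
        _ < 1 := hq
    rw [← h] at h2
    simp at h2
  have hpfac : ∀ j : ℕ, (1:ℂ) - a * b * p * p ^ j ≠ 0 := by
    intro j h
    rw [sub_eq_zero] at h
    exact habp j (by rw [pow_succ]; linear_combination -h)
  have hCprod : ∀ n : ℕ, (∏ j ∈ range n, ((1:ℂ) - q * q ^ j)) ≠ 0 :=
    fun n => Finset.prod_ne_zero_iff.mpr fun j _ => hqfac j
  have hDprod : ∀ n : ℕ, (∏ j ∈ range n, ((1:ℂ) - a * b * p * p ^ j)) ≠ 0 :=
    fun n => Finset.prod_ne_zero_iff.mpr fun j _ => hpfac j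
  -- limits of basic sequences
  have tp : Tendsto (fun k : ℕ => p ^ k) atTop (𝓝 0) := by
    apply tendsto_pow_atTop_nhds_zero_of_norm_lt_one
    exact hp
  have tq : Tendsto (fun k : ℕ => q ^ k) atTop (𝓝 0) := by
    apply tendsto_pow_atTop_nhds_zero_of_norm_lt_one
    exact hq
  have tpq : Tendsto (fun k : ℕ => (p * q) ^ k) atTop (𝓝 0) := by
    apply tendsto_pow_atTop_nhds_zero_of_norm_lt_one
    rw [norm_mul]
    calc ‖p‖ * ‖q‖ ≤ 1 * ‖q‖ := mul_le_mul_of_nonneg_right hp.le (norm_nonneg _)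
      _ = ‖q‖ := one_mul _
      _ < 1 := hq
  have tfac : ∀ (c : ℂ) (u : ℕ → ℂ), Tendsto u atTop (𝓝 0) →
      Tendsto (fun k => 1 - c * u k) atTop (𝓝 1) := by
    intro c u hu
    have h := tendsto_const_nhds.sub (tendsto_const_nhds.mul hu)
      (f := fun k => (1:ℂ)) (g := fun k => c * u k)
    simpa using h
  have tpq1 : Tendsto (fun k : ℕ => (p * q) ^ (k + 1)) atTop (𝓝 0) := by
    have := tpq.comp (tendsto_add_atTop_nat 1)
    simpa [Function.comp_def] using this
  have t_apq : Tendsto (fun k : ℕ => 1 - a * (p * q) ^ k) atTop (𝓝 1) := tfac a _ tpq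
  have t_apq1 : Tendsto (fun k : ℕ => 1 - a * (p * q) ^ (k + 1)) atTop (𝓝 1) := tfac a _ tpq1
  have t_pk : Tendsto (fun k : ℕ => 1 - a * p ^ k) atTop (𝓝 1) := tfac a _ tp
  have t_bq : Tendsto (fun k : ℕ => 1 - b⁻¹ * q ^ k) atTop (𝓝 1) := tfac b⁻¹ _ tq
  have t_qq : Tendsto (fun k : ℕ => 1 - q * q ^ k) atTop (𝓝 1) := tfac q _ tq
  have t_abp : Tendsto (fun k : ℕ => 1 - a * b * p * p ^ k) atTop (𝓝 1) := tfac (a * b * p) _ tp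
  -- eventually the extra factor is nonzero
  have hev_ne : ∀ᶠ k in atTop, (1:ℂ) - a * (p * q) ^ k ≠ 0 := by
    have h0 : Tendsto (fun k : ℕ => a * (p * q) ^ k) atTop (𝓝 0) := by
      simpa using tendsto_const_nhds.mul tpq (f := fun k : ℕ => a)
    filter_upwards [h0.eventually (Metric.ball_mem_nhds (0:ℂ) one_pos)] with k hk hcontra
    rw [sub_eq_zero] at hcontra
    rw [Complex.dist_eq, sub_zero, ← hcontra] at hk
    simp at hk
  -- the step ratio
  set g : ℕ → ℂ := fun k =>
      b * ((1 - a * (p * q) ^ (k + 1)) * ((1 - a * p ^ k) * (1 - b⁻¹ * q ^ k))) /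
        ((1 - a * (p * q) ^ k) * ((1 - q * q ^ k) * (1 - a * b * p * p ^ k))) with hgdef
  have key : ∀ k : ℕ,
      f (k + 1) * ((1 - a * (p * q) ^ k) * ((1 - q * q ^ k) * (1 - a * b * p * p ^ k)))
        = f k * (b * ((1 - a * (p * q) ^ (k + 1)) * ((1 - a * p ^ k) * (1 - b⁻¹ * q ^ k)))) := by
    intro k
    simp only [hfdef]
    rw [prod_range_succ, prod_range_succ, prod_range_succ, prod_range_succ]
    have hC := hCprod k
    have hD := hDprod k
    generalize (∏ j ∈ range k, (1 - a * p ^ j)) = A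
    generalize (∏ j ∈ range k, (1 - b⁻¹ * q ^ j)) = B
    generalize (∏ j ∈ range k, (1 - q * q ^ j)) = C at hC ⊢
    generalize (∏ j ∈ range k, (1 - a * b * p * p ^ j)) = D at hD ⊢
    have hE := hqfac k
    have hF := hpfac k
    generalize (1:ℂ) - q * q ^ k = E at hE ⊢
    generalize (1:ℂ) - a * b * p * p ^ k = F at hF ⊢
    simp only [pow_succ, mul_pow]
    field_simp
  have tg : Tendsto g atTop (𝓝 b) := by
    have hnum : Tendsto (fun k : ℕ =>
        b * ((1 - a * (p * q) ^ (k + 1)) * ((1 - a * p ^ k) * (1 - b⁻¹ * q ^ k)))) atTop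
        (𝓝 (b * (1 * (1 * 1)))) := tendsto_const_nhds.mul (t_apq1.mul (t_pk.mul t_bq))
    have hden : Tendsto (fun k : ℕ =>
        (1 - a * (p * q) ^ k) * ((1 - q * q ^ k) * (1 - a * b * p * p ^ k))) atTop
        (𝓝 (1 * (1 * 1))) := t_apq.mul (t_qq.mul t_abp)
    have h := hnum.div hden (by norm_num)
    simpa [hgdef, Pi.div_def] using h
  -- summability via the ratio test
  have hsummable : Summable f := by
    apply summable_of_ratio_norm_eventually_le (r := (‖b‖ + 1) / 2)
      (by have := norm_nonneg b; linarith)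
    have hgb : Tendsto (fun k => ‖g k‖) atTop (𝓝 ‖b‖) := tg.norm
    have hblt : ‖b‖ < (‖b‖ + 1) / 2 := by
      linarith
    filter_upwards [hev_ne, hgb.eventually (eventually_lt_nhds hblt)] with k hk hgk
    have hden_ne : ((1:ℂ) - a * (p * q) ^ k) * ((1 - q * q ^ k) * (1 - a * b * p * p ^ k)) ≠ 0 :=
      mul_ne_zero hk (mul_ne_zero (hqfac k) (hpfac k))
    have h2 : f (k + 1) = f k * g k := by
      rw [hgdef]
      rw [mul_div_assoc']
      rw [eq_div_iff hden_ne]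
      exact key k
    calc ‖f (k + 1)‖ = ‖g k‖ * ‖f k‖ := by rw [h2, norm_mul, mul_comm]
      _ ≤ (‖b‖ + 1) / 2 * ‖f k‖ :=
          mul_le_mul_of_nonneg_right hgk.le (norm_nonneg _)
  -- the telescoping closed form of partial sums
  set G : ℕ → ℂ := fun n =>
      ((∏ j ∈ range n, (1 - a * p ^ j)) * (∏ j ∈ range n, (1 - b⁻¹ * q ^ j)) * b ^ n) /
        ((∏ j ∈ range n, (1 - q * q ^ j)) * ∏ j ∈ range n, (1 - a * b * p * p ^ j)) with hGdef
  set pre : ℕ → ℂ := fun n => (1 - a * b * p ^ n) * (1 - q ^ n) / ((1 - a) * (1 - b)) with hpredef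
  have tele : ∀ n : ℕ, f n = pre n * G n - pre (n + 1) * G (n + 1) := by
    intro n
    simp only [hfdef, hGdef, hpredef]
    rw [prod_range_succ, prod_range_succ, prod_range_succ, prod_range_succ]
    have hC := hCprod n
    have hD := hDprod n
    generalize (∏ j ∈ range n, (1 - a * p ^ j)) = A
    generalize (∏ j ∈ range n, (1 - b⁻¹ * q ^ j)) = B
    generalize (∏ j ∈ range n, (1 - q * q ^ j)) = C at hC ⊢
    generalize (∏ j ∈ range n, (1 - a * b * p * p ^ j)) = D at hD ⊢
    simp only [pow_succ]
    have hqn' : (1:ℂ) - q ^ n * q ≠ 0 := by rw [mul_comm]; exact hqfac n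
    have hpn' : (1:ℂ) - a * p ^ n * b * p ≠ 0 := by convert hpfac n using 2; ring
    field_simp [h1a, h1b, hb0, hqfac n, hpfac n, hC, hD, hqn', hpn']
    ring
  have hps : ∀ n : ℕ, ∑ k ∈ range n, f k = -(pre n * G n) := by
    intro n
    induction n with
    | zero => simp [hpredef]
    | succ n ih => rw [sum_range_succ, ih, tele n]; ring
  -- limit of G
  have hGlim : Tendsto G atTop (𝓝 0) := by
    have hf0 : Tendsto f atTop (𝓝 0) := hsummable.tendsto_atTop_zero
    have hmul : Tendsto (fun k => (1 - a) / (1 - a * (p * q) ^ k) * f k) atTop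
        (𝓝 ((1 - a) / 1 * 0)) := (Tendsto.div tendsto_const_nhds t_apq one_ne_zero).mul hf0
    rw [show ((1 - a) / 1 * 0 : ℂ) = 0 by ring] at hmul
    apply Tendsto.congr' _ hmul
    filter_upwards [hev_ne] with k hk
    simp only [hfdef, hGdef]
    rw [mul_pow]
    have hk2 : (1:ℂ) - a * p ^ k * q ^ k ≠ 0 := by
      intro h; apply hk; rw [mul_pow]; linear_combination h
    field_simp [h1a, hb0, hk2, hCprod k, hDprod k]
  have hprelim : Tendsto pre atTop (𝓝 (1 * 1 / ((1 - a) * (1 - b)))) := by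
    have t1 : Tendsto (fun n : ℕ => 1 - a * b * p ^ n) atTop (𝓝 1) := tfac (a * b) _ tp
    have t2 : Tendsto (fun n : ℕ => 1 - q ^ n) atTop (𝓝 1) := by
      have h := tendsto_const_nhds.sub tq (f := fun k : ℕ => (1:ℂ))
      simpa using h
    exact (t1.mul t2).div tendsto_const_nhds (mul_ne_zero h1a h1b)
  have hFlim : Tendsto (fun n => pre n * G n) atTop (𝓝 0) := by
    have h := hprelim.mul hGlim
    simpa using h
  have hps_lim : Tendsto (fun n => ∑ k ∈ range n, f k) atTop (𝓝 0) := by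
    have h := hFlim.neg
    rw [neg_zero] at h
    exact Tendsto.congr (fun n => (hps n).symm) h
  have hsum : HasSum f (∑' k, f k) := hsummable.hasSum
  have h0 : (∑' k, f k) = 0 := tendsto_nhds_unique hsum.tendsto_sum_nat hps_lim
  rwa [h0] at hsum
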